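/- For every m ≥ 1, let A be the m×m matrix with rational entries A(i,j) = (−1)^{j−i+1}/(j−i+1)! for j ≥ i−1 (so A(i,i−1) = 1 and A(i,i) = −1) and A(i,j) = 0 for j < i−1. Then det A = (−1)^m/m!. -/
import Mathlib

open Finset

private lemma key_sum (N : ℕ) :
    ∑ t ∈ Finset.range (N + 1),
      ((-1 : ℚ) ^ t / ((t.factorial : ℚ) * ((N - t).factorial : ℚ))) =
      if N = 0 then 1 else 0 := by
  have h1 : ∀ t ∈ Finset.range (N + 1),
      ((-1 : ℚ) ^ t / ((t.factorial : ℚ) * ((N - t).factorial : ℚ)))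
        = (-1 : ℚ) ^ t * (N.choose t : ℚ) / (N.factorial : ℚ) := by
    intro t ht
    rw [Finset.mem_range] at ht
    have hle : t ≤ N := Nat.lt_succ_iff.mp ht
    have hfac : (N.choose t : ℚ) * (t.factorial : ℚ) * ((N - t).factorial : ℚ)
        = (N.factorial : ℚ) := by
      exact_mod_cast congrArg (Nat.cast (R := ℚ)) (Nat.choose_mul_factorial_mul_factorial hle)
    have h2 : (t.factorial : ℚ) ≠ 0 := Nat.cast_ne_zero.mpr t.factorial_ne_zero
    have h3 : ((N - t).factorial : ℚ) ≠ 0 := Nat.cast_ne_zero.mpr (N - t).factorial_ne_zero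
    have h4 : (N.factorial : ℚ) ≠ 0 := Nat.cast_ne_zero.mpr N.factorial_ne_zero
    rw [div_eq_div_iff (by positivity) h4]
    calc (-1 : ℚ) ^ t * (N.factorial : ℚ)
        = (-1 : ℚ) ^ t * ((N.choose t : ℚ) * (t.factorial : ℚ) * ((N - t).factorial : ℚ)) := by
          rw [hfac]
      _ = (-1 : ℚ) ^ t * (N.choose t : ℚ) * ((t.factorial : ℚ) * ((N - t).factorial : ℚ)) := by
          ring
  rw [Finset.sum_congr rfl h1, ← Finset.sum_div]
  have : ∑ t ∈ Finset.range (N + 1), (-1 : ℚ) ^ t * (N.choose t : ℚ)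
      = ((∑ t ∈ Finset.range (N + 1), (-1 : ℤ) ^ t * (N.choose t : ℤ) : ℤ) : ℚ) := by
    push_cast; ring
  rw [this, Int.alternating_sum_range_choose]
  split_ifs with h
  · subst h; simp
  · simp

/-- For every `m ≥ 1`, let `A` be the `m×m` matrix with rational entries
`A(i,j) = (−1)^{j−i+1}/(j−i+1)!` for `j ≥ i−1` (so `A(i,i−1) = 1` and `A(i,i) = −1`)
and `A(i,j) = 0` for `j < i−1`.  Then `det A = (−1)^m/m!`. -/
theorem stmt_18 (m : ℕ) (hm : 1 ≤ m) (A : Matrix (Fin m) (Fin m) ℚ)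
    (hA0 : ∀ i j : Fin m, (j : ℕ) + 1 < (i : ℕ) → A i j = 0)
    (hA : ∀ i j : Fin m, (i : ℕ) ≤ (j : ℕ) + 1 →
      A i j = (-1 : ℚ) ^ ((j : ℕ) + 1 - (i : ℕ)) / (((j : ℕ) + 1 - (i : ℕ)).factorial : ℚ)) :
    A.det = (-1 : ℚ) ^ m / (m.factorial : ℚ) := by
  obtain ⟨n, rfl⟩ : ∃ n, m = n + 1 := ⟨m - 1, (Nat.succ_pred_eq_of_pos hm).symm⟩
  clear hm
  set B : Matrix (Fin (n + 1)) (Fin (n + 1)) ℚ :=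
    Matrix.of fun j k => if (j : ℕ) ≤ (k : ℕ) then (((k : ℕ) - (j : ℕ)).factorial : ℚ)⁻¹ else 0
    with hB
  set C : Matrix (Fin (n + 1)) (Fin (n + 1)) ℚ :=
    Matrix.of fun i k => if (i : ℕ) = 0 then -(((k : ℕ) + 1).factorial : ℚ)⁻¹
      else if (k : ℕ) + 1 = (i : ℕ) then 1 else 0 with hC
  have hdetB : B.det = 1 := by
    rw [Matrix.det_of_upperTriangular]
    · apply Finset.prod_eq_one
      intro i _
      simp [hB]
    · intro i j hij
      simp only [hB, Matrix.of_apply]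
      rw [if_neg]
      exact Nat.not_le.mpr (Fin.lt_iff_val_lt_val.mp hij)
  have hmul : A * B = C := by
    ext i k
    rw [Matrix.mul_apply]
    set F : ℕ → ℚ := fun j => if (i : ℕ) ≤ j + 1 ∧ j ≤ (k : ℕ) then
          (-1 : ℚ) ^ (j + 1 - (i : ℕ)) /
            (((j + 1 - (i : ℕ)).factorial : ℚ) * (((k : ℕ) - j).factorial : ℚ)) else 0 with hF
    have hterm : ∀ j : Fin (n + 1), A i j * B j k = F (j : ℕ) := by
      intro j
      by_cases h1 : (i : ℕ) ≤ (j : ℕ) + 1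
      · by_cases h2 : (j : ℕ) ≤ (k : ℕ)
        · rw [hA i j h1]
          simp only [hF, hB, Matrix.of_apply, if_pos h2]
          rw [if_pos ⟨h1, h2⟩, ← div_div, div_eq_mul_inv _ (((k : ℕ) - (j:ℕ)).factorial : ℚ)]
        · simp only [hF, hB, Matrix.of_apply, if_neg h2]
          rw [if_neg (by omega)]
          ring
      · rw [hA0 i j (by omega)]
        simp only [hF]
        rw [if_neg (by omega)]
        ring
    rw [Finset.sum_congr rfl (fun j _ => hterm j), Fin.sum_univ_eq_sum_range]
    have hrestrict : ∑ j ∈ Finset.range (n + 1), F j = ∑ j ∈ Finset.range ((k : ℕ) + 1), F j := by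
      refine (Finset.sum_subset (Finset.range_subset_range.mpr (by have := k.isLt; omega)) ?_).symm
      intro j hj hj2
      rw [Finset.mem_range] at hj hj2
      simp only [hF]
      rw [if_neg (by omega)]
    rw [hrestrict]
    rcases Nat.eq_zero_or_eq_succ_pred (i : ℕ) with hi0 | hisucc
    · -- row 0
      have hsum : ∑ j ∈ Finset.range ((k : ℕ) + 1), F j
          = ∑ t ∈ Finset.range ((k : ℕ) + 1 + 1),
              ((-1 : ℚ) ^ t / ((t.factorial : ℚ) * (((k : ℕ) + 1 - t).factorial : ℚ)))
            - 1 / (((0 : ℕ).factorial : ℚ) * (((k : ℕ) + 1).factorial : ℚ)) := by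
        rw [Finset.sum_range_succ' (fun t =>
          ((-1 : ℚ) ^ t / ((t.factorial : ℚ) * (((k : ℕ) + 1 - t).factorial : ℚ)))) ((k : ℕ) + 1)]
        simp only [pow_zero, Nat.sub_zero]
        rw [add_sub_cancel_right]
        apply Finset.sum_congr rfl
        intro j hj
        rw [Finset.mem_range] at hj
        simp only [hF]
        rw [if_pos (by omega)]
        have e1 : j + 1 - (i : ℕ) = j + 1 := by omega
        have e2 : (k : ℕ) - j = (k : ℕ) + 1 - (j + 1) := by omega
        rw [e1, e2]
      rw [hsum, key_sum ((k : ℕ) + 1), if_neg (by omega)]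
      simp only [hC, Matrix.of_apply, if_pos hi0]
      simp
    · -- rows i ≥ 1
      set i' := (i : ℕ) - 1 with hi'
      have hii : (i : ℕ) = i' + 1 := hisucc
      by_cases hk : i' ≤ (k : ℕ)
      · have hsub : ∑ j ∈ Finset.range ((k : ℕ) + 1), F j = ∑ j ∈ Finset.Ico i' ((k : ℕ) + 1), F j := by
          refine (Finset.sum_subset ?_ ?_).symm
          · intro j hj
            rw [Finset.mem_Ico] at hj
            rw [Finset.mem_range]
            omega
          · intro j hj hj2
            rw [Finset.mem_range] at hj
            rw [Finset.mem_Ico] at hj2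
            simp only [hF]
            rw [if_neg (by omega)]
        rw [hsub, Finset.sum_Ico_eq_sum_range]
        have hcongr : ∀ t ∈ Finset.range ((k : ℕ) + 1 - i'), F (i' + t)
            = (-1 : ℚ) ^ t / ((t.factorial : ℚ) * ((((k : ℕ) - i') - t).factorial : ℚ)) := by
          intro t ht
          rw [Finset.mem_range] at ht
          simp only [hF]
          rw [if_pos (by omega)]
          have e1 : i' + t + 1 - (i : ℕ) = t := by omega
          have e2 : (k : ℕ) - (i' + t) = (k : ℕ) - i' - t := by omega
          rw [e1, e2]
        rw [Finset.sum_congr rfl hcongr]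
        have hN : (k : ℕ) + 1 - i' = ((k : ℕ) - i') + 1 := by omega
        rw [hN, key_sum ((k : ℕ) - i')]
        simp only [hC, Matrix.of_apply]
        by_cases hke : (k : ℕ) + 1 = (i : ℕ)
        · rw [if_pos (show (k : ℕ) - i' = 0 by omega), if_neg (show ¬((i : ℕ) = 0) by omega),
            if_pos hke]
        · rw [if_neg (show ¬((k : ℕ) - i' = 0) by omega), if_neg (show ¬((i : ℕ) = 0) by omega),
            if_neg hke]
      · have hz : ∑ j ∈ Finset.range ((k : ℕ) + 1), F j = 0 := by
          apply Finset.sum_eq_zero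
          intro j hj
          rw [Finset.mem_range] at hj
          simp only [hF]
          rw [if_neg (by omega)]
        rw [hz]
        simp only [hC, Matrix.of_apply]
        rw [if_neg (by omega), if_neg (by omega)]
  have hdetC : C.det = (-1 : ℚ) ^ (n + 1) / ((n + 1).factorial : ℚ) := by
    rw [Matrix.det_succ_column C (Fin.last n)]
    rw [Finset.sum_eq_single (0 : Fin (n + 1))]
    · have hminor : C.submatrix (Fin.succAbove 0) (Fin.succAbove (Fin.last n)) = 1 := by
        ext i' j'
        simp only [Matrix.submatrix_apply, Fin.succAbove_last, Fin.succAbove_zero, hC,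
          Matrix.of_apply, Matrix.one_apply, Fin.val_succ, Fin.coe_castSucc,
          Function.comp_apply]
        rw [if_neg (by omega)]
        by_cases h : i' = j'
        · subst h; rw [if_pos rfl, if_pos rfl]
        · rw [if_neg (fun hc => h (Fin.ext (by omega))), if_neg (by simpa using h)]
      rw [hminor, Matrix.det_one]
      simp only [hC, Matrix.of_apply, Fin.val_zero, if_pos rfl, Fin.val_last, if_true, zero_add]
      rw [div_eq_mul_inv, pow_succ]
      ring
    · intro i _ hi
      have hz : C i (Fin.last n) = 0 := by
        simp only [hC, Matrix.of_apply, Fin.val_last]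
        rw [if_neg (fun hc => hi (Fin.ext (by simp [hc]))), if_neg (by have := i.isLt; omega)]
      rw [hz]
      ring
    · intro h
      exact absurd (Finset.mem_univ _) h
  have hd := congrArg Matrix.det hmul
  rw [Matrix.det_mul, hdetB, mul_one, hdetC] at hd
  exact hd
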